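/- Let ψ_1, …, ψ_N ∈ ℓ²(ℤ) be an orthonormal family of complex sequences, let ξ = (ξ_1, …, ξ_N) ∈ ℂ^N, and let n ∈ ℤ. Then |∑_{j=1}^N ξ_j ψ_j(n)|⁴ ≤ ( ∑_{j=1}^N |ξ_j|² ) · ∑_{k∈ℤ} | ∑_{j=1}^N ξ_j (Dψ_j)(k) |², where (Dψ)(k) = ψ(k+1) − ψ(k). -/

import Mathlib

open Complex Finset Filter
open scoped ENNReal

private lemma telescope_tsum' {u : ℕ → ℝ} (hs : Summable fun i => u i - u (i + 1))
    (h0 : Tendsto u atTop (nhds 0)) :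
    ∑' i, (u i - u (i + 1)) = u 0 := by
  have h1 := hs.hasSum.tendsto_sum_nat
  have h2 : Tendsto (fun m => ∑ i ∈ Finset.range m, (u i - u (i + 1))) atTop (nhds (u 0)) := by
    simp only [Finset.sum_range_sub']
    simpa using tendsto_const_nhds.sub h0
  exact tendsto_nhds_unique h1 h2

private lemma tsum_cs' {a b : ℤ → ℝ} (ha : ∀ k, 0 ≤ a k) (hb : ∀ k, 0 ≤ b k)
    (hA : Summable fun k => a k ^ 2) (hB : Summable fun k => b k ^ 2)
    (hab : Summable fun k => a k * b k) :
    ∑' k, a k * b k ≤ Real.sqrt (∑' k, a k ^ 2) * Real.sqrt (∑' k, b k ^ 2) := by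
  refine Summable.tsum_le_of_sum_le hab fun s => ?_
  have h1 : (∑ k ∈ s, a k * b k) ^ 2 ≤ (∑ k ∈ s, a k ^ 2) * (∑ k ∈ s, b k ^ 2) :=
    Finset.sum_mul_sq_le_sq_mul_sq s a b
  have h2 : ∑ k ∈ s, a k ^ 2 ≤ ∑' k, a k ^ 2 := Summable.sum_le_tsum s (fun k _ => sq_nonneg _) hA
  have h3 : ∑ k ∈ s, b k ^ 2 ≤ ∑' k, b k ^ 2 := Summable.sum_le_tsum s (fun k _ => sq_nonneg _) hB
  have h0 : 0 ≤ ∑ k ∈ s, a k * b k := Finset.sum_nonneg fun k _ => mul_nonneg (ha k) (hb k)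
  calc ∑ k ∈ s, a k * b k = Real.sqrt ((∑ k ∈ s, a k * b k) ^ 2) := (Real.sqrt_sq h0).symm
    _ ≤ Real.sqrt ((∑' k, a k ^ 2) * (∑' k, b k ^ 2)) := by
        apply Real.sqrt_le_sqrt
        calc (∑ k ∈ s, a k * b k) ^ 2 ≤ (∑ k ∈ s, a k ^ 2) * (∑ k ∈ s, b k ^ 2) := h1
          _ ≤ (∑' k, a k ^ 2) * (∑' k, b k ^ 2) := by
              apply mul_le_mul h2 h3 (Finset.sum_nonneg fun k _ => sq_nonneg _)
              exact tsum_nonneg fun k => sq_nonneg _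
    _ = _ := Real.sqrt_mul (tsum_nonneg fun k => sq_nonneg _) _

set_option maxHeartbeats 1000000 in
theorem stmt_8
    (N : ℕ) (ψ : Fin N → ℤ → ℂ)
    (hl2 : ∀ j, Summable fun n : ℤ => ‖ψ j n‖ ^ 2)
    (horth : ∀ j k, (∑' n : ℤ, ψ j n * (starRingEnd ℂ) (ψ k n)) = if j = k then 1 else 0)
    (ξ : Fin N → ℂ) (n : ℤ) :
    ‖∑ j : Fin N, ξ j * ψ j n‖ ^ 4
      ≤ (∑ j : Fin N, ‖ξ j‖ ^ 2) *
        ∑' k : ℤ, ‖∑ j : Fin N, ξ j * (ψ j (k + 1) - ψ j k)‖ ^ 2 := by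
  classical
  set f : ℤ → ℂ := fun k => ∑ j : Fin N, ξ j * ψ j k with hfdef
  -- l² construction for the value of ∑' ‖f k‖²
  have hmem : ∀ j, Memℓp (ψ j) 2 := by
    intro j
    apply memℓp_gen
    have h2 : (2 : ℝ≥0∞).toReal = (2 : ℕ) := by simp
    rw [h2]
    simpa [Real.rpow_natCast] using hl2 j
  set Ψ : Fin N → lp (fun _ : ℤ => ℂ) 2 := fun j => ⟨ψ j, hmem j⟩ with hΨ
  have hON : Orthonormal ℂ Ψ := by
    rw [orthonormal_iff_ite]
    intro j k
    have h1 : (inner ℂ (Ψ j) (Ψ k) : ℂ) = ∑' m : ℤ, inner ℂ (ψ j m) (ψ k m) :=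
      lp.inner_eq_tsum _ _
    rw [h1]
    have heq : ∀ m : ℤ, (inner ℂ (ψ j m) (ψ k m) : ℂ) = (starRingEnd ℂ) (ψ j m) * ψ k m :=
      fun m => by simp only [RCLike.inner_apply]; ring
    simp_rw [heq]
    have h2 : (∑' m : ℤ, (starRingEnd ℂ) (ψ j m) * ψ k m)
        = (starRingEnd ℂ) (∑' m : ℤ, ψ j m * (starRingEnd ℂ) (ψ k m)) := by
      rw [Complex.conj_tsum]
      congr 1
      funext m
      simp [mul_comm]
    rw [h2, horth j k]
    split_ifs <;> simp
  set F : lp (fun _ : ℤ => ℂ) 2 := ∑ j : Fin N, ξ j • Ψ j with hF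
  have hFk : ∀ k : ℤ, F k = f k := by
    intro k
    rw [hF, lp.coeFn_sum]
    simp [Ψ, hfdef]
  have hnormF : ‖F‖ ^ 2 = ∑ j : Fin N, ‖ξ j‖ ^ 2 := by
    have h1 : (inner ℂ F F : ℂ) = ∑ j : Fin N, (starRingEnd ℂ) (ξ j) * ξ j :=
      hON.inner_sum ξ ξ Finset.univ
    have h2 : ‖F‖ ^ 2 = RCLike.re (inner ℂ F F : ℂ) := (inner_self_eq_norm_sq F).symm
    rw [h2, h1, map_sum]
    congr 1
    funext j
    rw [RCLike.conj_mul]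
    simp [← Complex.ofReal_pow]
  have Sa : Summable fun k : ℤ => ‖f k‖ ^ 2 := by
    have hm := lp.memℓp F
    have hs := hm.summable (p := 2) (by norm_num)
    have h2 : (2 : ℝ≥0∞).toReal = (2 : ℕ) := by simp
    rw [h2] at hs
    simp only [Real.rpow_natCast] at hs
    apply hs.congr
    intro k
    rw [hFk k]
  have hA2 : (∑' k : ℤ, ‖f k‖ ^ 2) = ∑ j : Fin N, ‖ξ j‖ ^ 2 := by
    have h3 : ‖F‖ ^ (2 : ℝ) = ∑' k : ℤ, ‖F k‖ ^ (2 : ℝ) := by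
      simpa using lp.norm_rpow_eq_tsum (p := 2) (by norm_num) F
    rw [show ((2:ℝ)) = ((2:ℕ):ℝ) by norm_num] at h3
    simp_rw [Real.rpow_natCast] at h3
    rw [← hnormF, h3]
    congr 1
    funext k
    rw [hFk k]
  -- real sequences
  set a : ℤ → ℝ := fun k => ‖f k‖ with hadef
  set b : ℤ → ℝ := fun k => ‖f (k + 1) - f k‖ with hbdef
  set g : ℤ → ℝ := fun k => a k ^ 2 with hgdef
  set d : ℤ → ℝ := fun k => |g (k + 1) - g k| with hddef
  have ha0 : ∀ k, 0 ≤ a k := fun k => norm_nonneg _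
  have hb0 : ∀ k, 0 ≤ b k := fun k => norm_nonneg _
  have Sa2 : Summable fun k : ℤ => a k ^ 2 := Sa
  have Sa' : Summable fun k : ℤ => a (k + 1) ^ 2 :=
    Sa2.comp_injective (add_left_injective (1 : ℤ))
  have hbba : ∀ k : ℤ, b k ≤ a (k + 1) + a k := fun k => norm_sub_le _ _
  have SB : Summable fun k : ℤ => b k ^ 2 := by
    apply Summable.of_nonneg_of_le (fun k => sq_nonneg _)
      (f := fun k => 2 * (a (k + 1) ^ 2 + a k ^ 2))
    · intro k
      nlinarith [hbba k, hb0 k, ha0 k, ha0 (k + 1), sq_nonneg (a (k + 1) - a k)]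
    · exact (Sa'.add Sa2).mul_left 2
  have Sab1 : Summable fun k : ℤ => b k * a k := by
    apply Summable.of_nonneg_of_le (fun k => mul_nonneg (hb0 k) (ha0 k))
      (f := fun k => b k ^ 2 + a k ^ 2)
    · intro k; nlinarith [sq_nonneg (b k - a k)]
    · exact SB.add Sa2
  have Sab2 : Summable fun k : ℤ => b k * a (k + 1) := by
    apply Summable.of_nonneg_of_le (fun k => mul_nonneg (hb0 k) (ha0 (k + 1)))
      (f := fun k => b k ^ 2 + a (k + 1) ^ 2)
    · intro k; nlinarith [sq_nonneg (b k - a (k + 1))]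
    · exact SB.add Sa'
  have key : ∀ k : ℤ, d k ≤ b k * a k + b k * a (k + 1) := by
    intro k
    have h1 : |a (k + 1) - a k| ≤ b k := abs_norm_sub_norm_le (f (k + 1)) (f k)
    have h2 := abs_le.mp h1
    rw [hddef]
    simp only [hgdef]
    rw [abs_le]
    constructor <;> nlinarith [ha0 k, ha0 (k + 1), hb0 k]
  have Sd : Summable d :=
    Summable.of_nonneg_of_le (fun k => abs_nonneg _) key (Sab1.add Sab2)
  -- telescoping
  have hg0 : Tendsto g cofinite (nhds 0) := Sa2.tendsto_cofinite_zero
  have hinj1 : Function.Injective fun i : ℕ => n + (i : ℤ) := by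
    intro i j hij; simpa using hij
  have hinj2 : Function.Injective fun i : ℕ => n - 1 - (i : ℤ) := by
    intro i j hij; simp only [sub_right_injective] at hij; omega
  have hcomp1 : Summable fun i : ℕ => d (n + (i : ℤ)) := Sd.comp_injective hinj1
  have hcomp2 : Summable fun i : ℕ => d (n - 1 - (i : ℤ)) := Sd.comp_injective hinj2
  have T1 : g n ≤ ∑' i : ℕ, d (n + (i : ℤ)) := by
    set u : ℕ → ℝ := fun i => g (n + (i : ℤ)) with hudef
    have habs : ∀ i : ℕ, |u i - u (i + 1)| = d (n + (i : ℤ)) := by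
      intro i
      rw [hudef, hddef]
      rw [abs_sub_comm]
      congr 2 <;> push_cast <;> ring
    have hdiff : Summable fun i : ℕ => u i - u (i + 1) := by
      apply Summable.of_norm_bounded hcomp1
      intro i
      rw [Real.norm_eq_abs, habs i]
    have hu0 : Tendsto u atTop (nhds 0) := by
      apply hg0.comp
      rw [← Nat.cofinite_eq_atTop]
      exact hinj1.tendsto_cofinite
    have htel : ∑' i : ℕ, (u i - u (i + 1)) = u 0 := telescope_tsum' hdiff hu0
    have hgn : g n = u 0 := by rw [hudef]; norm_num
    rw [hgn, ← htel]
    apply Summable.tsum_le_tsum _ hdiff hcomp1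
    intro i
    rw [← habs i]
    exact le_abs_self _
  have T2 : g n ≤ ∑' i : ℕ, d (n - 1 - (i : ℤ)) := by
    set v : ℕ → ℝ := fun i => g (n - (i : ℤ)) with hvdef
    have habs : ∀ i : ℕ, |v i - v (i + 1)| = d (n - 1 - (i : ℤ)) := by
      intro i
      rw [hvdef, hddef]
      congr 2 <;> push_cast <;> ring
    have hdiff : Summable fun i : ℕ => v i - v (i + 1) := by
      apply Summable.of_norm_bounded hcomp2
      intro i
      rw [Real.norm_eq_abs, habs i]
    have hinj3 : Function.Injective fun i : ℕ => n - (i : ℤ) := by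
      intro i j hij; simp only [sub_right_injective] at hij; omega
    have hv0 : Tendsto v atTop (nhds 0) := by
      apply hg0.comp
      rw [← Nat.cofinite_eq_atTop]
      exact hinj3.tendsto_cofinite
    have htel : ∑' i : ℕ, (v i - v (i + 1)) = v 0 := telescope_tsum' hdiff hv0
    have hgn : g n = v 0 := by rw [hvdef]; norm_num
    rw [hgn, ← htel]
    apply Summable.tsum_le_tsum _ hdiff hcomp2
    intro i
    rw [← habs i]
    exact le_abs_self _
  -- splitting of the tsum over ℤ
  have hsplit : ∑' k : ℤ, d k
      = (∑' i : ℕ, d (n + (i : ℤ))) + ∑' i : ℕ, d (n - 1 - (i : ℤ)) := by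
    have e1 : ∑' k : ℤ, d k = ∑' k : ℤ, d (n + k) := ((Equiv.addLeft n).tsum_eq d).symm
    have e2 : (fun k : ℤ => d (n + k))
        = Int.rec (fun i : ℕ => d (n + (i : ℤ))) (fun i : ℕ => d (n - 1 - (i : ℤ))) := by
      funext k
      cases k with
      | ofNat i => rfl
      | negSucc i =>
        show d (n + Int.negSucc i) = d (n - 1 - (i : ℤ))
        congr 1
        rw [Int.negSucc_eq]
        ring
    rw [e1, e2, tsum_int_rec hcomp1 hcomp2]
  have h2g : 2 * g n ≤ ∑' k : ℤ, d k := by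
    rw [hsplit]; linarith
  -- Cauchy-Schwarz
  set A2 : ℝ := ∑' k : ℤ, a k ^ 2 with hA2def
  set B2 : ℝ := ∑' k : ℤ, b k ^ 2 with hB2def
  have hA2nn : 0 ≤ A2 := tsum_nonneg fun k => sq_nonneg _
  have hB2nn : 0 ≤ B2 := tsum_nonneg fun k => sq_nonneg _
  have hshift : (∑' k : ℤ, a (k + 1) ^ 2) = A2 := by
    rw [hA2def]
    exact (Equiv.addRight (1 : ℤ)).tsum_eq (fun k => a k ^ 2)
  have CS1 : ∑' k : ℤ, b k * a k ≤ Real.sqrt B2 * Real.sqrt A2 :=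
    tsum_cs' hb0 ha0 SB Sa2 Sab1
  have CS2 : ∑' k : ℤ, b k * a (k + 1) ≤ Real.sqrt B2 * Real.sqrt A2 := by
    have := tsum_cs' (a := b) (b := fun k => a (k + 1)) hb0 (fun k => ha0 (k + 1)) SB Sa' Sab2
    rwa [hshift] at this
  have hdb : ∑' k : ℤ, d k ≤ ∑' k : ℤ, (b k * a k + b k * a (k + 1)) :=
    Summable.tsum_le_tsum key Sd (Sab1.add Sab2)
  have hsum2 : ∑' k : ℤ, (b k * a k + b k * a (k + 1))
      = (∑' k : ℤ, b k * a k) + ∑' k : ℤ, b k * a (k + 1) := Summable.tsum_add Sab1 Sab2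
  have hfinal : g n ≤ Real.sqrt A2 * Real.sqrt B2 := by
    have : 2 * g n ≤ 2 * (Real.sqrt B2 * Real.sqrt A2) := by
      calc 2 * g n ≤ ∑' k : ℤ, d k := h2g
        _ ≤ _ := by rw [hsum2] at hdb; linarith
    linarith [this, mul_comm (Real.sqrt A2) (Real.sqrt B2)]
  -- conclude
  have hg_nn : 0 ≤ g n := sq_nonneg _
  have hsq : g n ^ 2 ≤ A2 * B2 := by
    calc g n ^ 2 ≤ (Real.sqrt A2 * Real.sqrt B2) ^ 2 := by
          apply pow_le_pow_left₀ hg_nn hfinal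
      _ = A2 * B2 := by
          rw [mul_pow, Real.sq_sqrt hA2nn, Real.sq_sqrt hB2nn]
  have hBtarget : (∑' k : ℤ, ‖∑ j : Fin N, ξ j * (ψ j (k + 1) - ψ j k)‖ ^ 2) = B2 := by
    rw [hB2def]
    congr 1
    funext k
    congr 2
    simp only [hfdef, mul_sub, Finset.sum_sub_distrib]
  calc ‖f n‖ ^ 4 = g n ^ 2 := by rw [hgdef, hadef]; ring
    _ ≤ A2 * B2 := hsq
    _ = (∑ j : Fin N, ‖ξ j‖ ^ 2) * B2 := by rw [hA2]
    _ = _ := by rw [hBtarget]
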